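/- Let x be the KL-projection of y ∈ R^K_{>0} onto Δ_{K,ε} with 0 < ε < 1/K. Then x is characterized by the KKT conditions: there exist τ̃ ∈ R and p ∈ R^K_{≤0} with log(x/y) + (1+τ̃)1_K + p = 0, ⟨x,1_K⟩ = 1, x ≥ ε1_K, and ⟨x − ε1_K, p⟩ = 0; in particular x = (y ∘ q)/⟨y∘q, 1_K⟩ where q = exp(−p) ≥ 1 componentwise, and q_k = 1 whenever x_k > ε. -/

import Mathlib

open Real Set Filter

/-- If `g` has derivative `d` at `0` and `g 0` is a minimum on a right
interval `(0, δ]`, then `0 ≤ d`. -/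
lemma aux_right_deriv_nonneg {g : ℝ → ℝ} {d δ : ℝ} (hδ : 0 < δ)
    (hg : HasDerivAt g d 0) (hmin : ∀ t ∈ Set.Ioc (0:ℝ) δ, g 0 ≤ g t) : 0 ≤ d := by
  have h1 : HasDerivWithinAt g d (Set.Ioi 0) 0 := hg.hasDerivWithinAt
  have h2 : Tendsto (slope g 0) (nhdsWithin 0 (Set.Ioi 0)) (nhds d) := by
    have := (hasDerivWithinAt_iff_tendsto_slope' (by simp : (0:ℝ) ∉ Set.Ioi (0:ℝ))).1 h1
    exact this
  refine ge_of_tendsto h2 ?_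
  have hIoc : Set.Ioc (0:ℝ) δ ∈ nhdsWithin 0 (Set.Ioi 0) := by
    rw [show Set.Ioc (0:ℝ) δ = Set.Iic δ ∩ Set.Ioi 0 by ext t; simp [and_comm]]
    exact Filter.inter_mem (mem_nhdsWithin_of_mem_nhds (Iic_mem_nhds hδ)) self_mem_nhdsWithin
  filter_upwards [hIoc] with t ht
  have ht0 : 0 < t := ht.1
  have : 0 ≤ g t - g 0 := sub_nonneg.2 (hmin t ht)
  have : 0 ≤ (g t - g 0) / (t - 0) := by
    apply div_nonneg this; linarith
  simpa [slope_def_field, div_eq_iff, ht0.ne'] using this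

/-- KKT characterization of the KL projection onto the ε-probability simplex:
if `x` minimizes `KL(·,y)` over `Δ_{K,ε}` (`0 < ε < 1/K`), then there exist a
multiplier `τ̃` and `p ≤ 0` with `log(x/y) + (1+τ̃)𝟙 + p = 0`, `⟨x,𝟙⟩ = 1`,
`x ≥ ε𝟙`, `⟨x − ε𝟙, p⟩ = 0`; in particular `x = (y ∘ q)/⟨y ∘ q, 𝟙⟩` with
`q = exp(−p) ≥ 1` componentwise and `q_k = 1` whenever `x_k > ε`. -/
theorem stmt_19 {K : ℕ} (y : Fin K → ℝ) (hy : ∀ k, 0 < y k)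
    (ε : ℝ) (hε0 : 0 < ε) (hεK : ε < 1 / K)
    (x : Fin K → ℝ)
    (hxsum : ∑ k, x k = 1) (hxε : ∀ k, ε ≤ x k)
    (hmin : ∀ z : Fin K → ℝ, (∑ k, z k = 1) → (∀ k, ε ≤ z k) →
      ∑ k, x k * Real.log (x k / y k) ≤ ∑ k, z k * Real.log (z k / y k)) :
    ∃ (τ : ℝ) (p : Fin K → ℝ),
      (∀ k, p k ≤ 0) ∧
      (∀ k, Real.log (x k / y k) + (1 + τ) + p k = 0) ∧
      (∑ k, (x k - ε) * p k = 0) ∧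
      (∀ k, x k = y k * Real.exp (-(p k)) / ∑ k', y k' * Real.exp (-(p k'))) ∧
      (∀ k, 1 ≤ Real.exp (-(p k))) ∧
      (∀ k, ε < x k → Real.exp (-(p k)) = 1) := by
  have hK : 0 < K := by
    by_contra h
    push_neg at h
    interval_cases K
    simp at hεK
    linarith
  have hxpos : ∀ k, 0 < x k := fun k => lt_of_lt_of_le hε0 (hxε k)
  set L : Fin K → ℝ := fun k => Real.log (x k / y k) with hL
  -- Key claim from optimality
  have key : ∀ j k : Fin K, ε < x k → L k ≤ L j := by
    intro j k hk
    rcases eq_or_ne j k with rfl | hjk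
    · exact le_rfl
    · -- perturbation
      set δ := x k - ε with hδdef
      have hδ : 0 < δ := by simp [hδdef]; linarith
      set g : ℝ → ℝ := fun t =>
        ((x j + t) * Real.log (x j + t) - (x j + t) * Real.log (y j)) +
        ((x k - t) * Real.log (x k - t) - (x k - t) * Real.log (y k)) with hg
      have hgd : HasDerivAt g (L j - L k) 0 := by
        have h1 : HasDerivAt (fun t : ℝ => x j + t) 1 0 := (hasDerivAt_id 0).const_add (x j)
        have h2 : HasDerivAt (fun t : ℝ => x k - t) (-1) 0 := (hasDerivAt_id 0).const_sub (x k)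
        have h3 : HasDerivAt (fun s : ℝ => s * Real.log s) (Real.log (x j) + 1) (x j) :=
          Real.hasDerivAt_mul_log (hxpos j).ne'
        have h4 : HasDerivAt (fun s : ℝ => s * Real.log s) (Real.log (x k) + 1) (x k) :=
          Real.hasDerivAt_mul_log (hxpos k).ne'
        have h5 : HasDerivAt (fun t : ℝ => (x j + t) * Real.log (x j + t))
            ((Real.log (x j) + 1) * 1) 0 := by
          exact HasDerivAt.comp (0:ℝ)
            (show HasDerivAt (fun s : ℝ => s * Real.log s) (Real.log (x j) + 1)
              ((fun t : ℝ => x j + t) 0) by simpa using h3) h1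
        have h6 : HasDerivAt (fun t : ℝ => (x k - t) * Real.log (x k - t))
            ((Real.log (x k) + 1) * (-1)) 0 := by
          exact HasDerivAt.comp (0:ℝ)
            (show HasDerivAt (fun s : ℝ => s * Real.log s) (Real.log (x k) + 1)
              ((fun t : ℝ => x k - t) 0) by simpa using h4) h2
        have h7 : HasDerivAt (fun t : ℝ => (x j + t) * Real.log (y j)) (1 * Real.log (y j)) 0 :=
          h1.mul_const _
        have h8 : HasDerivAt (fun t : ℝ => (x k - t) * Real.log (y k)) ((-1) * Real.log (y k)) 0 :=
          h2.mul_const _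
        have := (h5.sub h7).add (h6.sub h8)
        have hLj : L j = Real.log (x j) - Real.log (y j) :=
          Real.log_div (hxpos j).ne' (hy j).ne'
        have hLk : L k = Real.log (x k) - Real.log (y k) :=
          Real.log_div (hxpos k).ne' (hy k).ne'
        rw [show L j - L k = (Real.log (x j) + 1) * 1 - 1 * Real.log (y j) + ((Real.log (x k) + 1) * -1 - -1 * Real.log (y k)) by rw [hLj, hLk]; ring]
        exact this
      have hgmin : ∀ t ∈ Set.Ioc (0:ℝ) δ, g 0 ≤ g t := by
        intro t ht
        set z : Fin K → ℝ := fun k' => if k' = j then x j + t else if k' = k then x k - t else x k'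
          with hz
        have hzj : z j = x j + t := by simp [hz]
        have hzk : z k = x k - t := by simp [hz, hjk.symm]
        have hzo : ∀ c, c ≠ j → c ≠ k → z c = x c := by
          intro c h1 h2; simp [hz, h1, h2]
        have hzsum : ∑ k', z k' = 1 := by
          have : ∑ k', (z k' - x k') = (z j - x j) + (z k - x k) := by
            apply Finset.sum_eq_add j k hjk
            · intro c _ ⟨h1, h2⟩; rw [hzo c h1 h2]; ring
            · simp
            · simp
          rw [Finset.sum_sub_distrib, hxsum, hzj, hzk] at this
          linarith
        have hzε : ∀ k', ε ≤ z k' := by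
          intro k'
          rcases eq_or_ne k' j with rfl | h1
          · rw [hzj]; have := hxε k'; linarith [ht.1]
          rcases eq_or_ne k' k with rfl | h2
          · rw [hzk]; have := ht.2; simp [hδdef] at this; linarith
          · rw [hzo k' h1 h2]; exact hxε k'
        have hobj := hmin z hzsum hzε
        -- relate objective difference to g
        have hdiff : ∑ k', z k' * Real.log (z k' / y k') - ∑ k', x k' * Real.log (x k' / y k')
            = g t - g 0 := by
          rw [← Finset.sum_sub_distrib]
          have : ∑ k', (z k' * Real.log (z k' / y k') - x k' * Real.log (x k' / y k'))
              = (z j * Real.log (z j / y j) - x j * Real.log (x j / y j))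
                + (z k * Real.log (z k / y k) - x k * Real.log (x k / y k)) := by
            apply Finset.sum_eq_add j k hjk
            · intro c _ ⟨h1, h2⟩; rw [hzo c h1 h2]; ring
            · simp
            · simp
          rw [this, hzj, hzk, hg]
          have e1 : Real.log ((x j + t) / y j) = Real.log (x j + t) - Real.log (y j) :=
            Real.log_div (by nlinarith [hxpos j, ht.1]) (hy j).ne'
          have e2 : Real.log ((x k - t) / y k) = Real.log (x k - t) - Real.log (y k) := by
            have : ε ≤ x k - t := by have := ht.2; simp [hδdef] at this; linarith
            exact Real.log_div (by linarith) (hy k).ne'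
          have e3 : Real.log (x j / y j) = Real.log (x j) - Real.log (y j) :=
            Real.log_div (hxpos j).ne' (hy j).ne'
          have e4 : Real.log (x k / y k) = Real.log (x k) - Real.log (y k) :=
            Real.log_div (hxpos k).ne' (hy k).ne'
          rw [e1, e2, e3, e4]; simp; ring
        have h9 : (0:ℝ) ≤ g t - g 0 := hdiff ▸ (sub_nonneg.2 hobj)
        linarith
      have := aux_right_deriv_nonneg hδ hgd hgmin
      linarith
  -- choose minimizing index
  obtain ⟨j0, -, hj0⟩ := Finset.exists_min_image Finset.univ L
    ⟨⟨0, hK⟩, Finset.mem_univ _⟩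
  refine ⟨-1 - L j0, fun k => L j0 - L k, ?_, ?_, ?_, ?_, ?_, ?_⟩
  · intro k; show L j0 - L k ≤ 0; have := hj0 k (Finset.mem_univ k); linarith
  · intro k; show L k + (1 + (-1 - L j0)) + (L j0 - L k) = 0; ring
  · apply Finset.sum_eq_zero
    intro k _
    rcases eq_or_lt_of_le (hxε k) with h | h
    · show (x k - ε) * (L j0 - L k) = 0
      rw [← h]; ring
    · show (x k - ε) * (L j0 - L k) = 0
      have h1 := key j0 k h
      have h2 := hj0 k (Finset.mem_univ k)
      have : L j0 - L k = 0 := by linarith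
      rw [this]; ring
  · intro k
    have hexp : ∀ k', y k' * Real.exp (-(L j0 - L k')) = x k' * Real.exp (-(L j0)) := by
      intro k'
      have h10 : Real.exp (L k') = x k' / y k' := Real.exp_log (div_pos (hxpos k') (hy k'))
      have hx' : y k' * Real.exp (L k') = x k' := by
        rw [h10, mul_div_cancel₀ _ (hy k').ne']
      rw [show -(L j0 - L k') = L k' + (-(L j0)) by ring, Real.exp_add, ← mul_assoc, hx']
    rw [hexp k]
    have : ∑ k', y k' * Real.exp (-(L j0 - L k')) = Real.exp (-(L j0)) := by
      rw [Finset.sum_congr rfl (fun k' _ => hexp k'), ← Finset.sum_mul, hxsum, one_mul]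
    rw [this, mul_div_assoc, div_self (Real.exp_pos _).ne', mul_one]
  · intro k
    show 1 ≤ Real.exp (-(L j0 - L k))
    rw [show (1:ℝ) = Real.exp 0 by simp]
    apply Real.exp_le_exp.2
    have := hj0 k (Finset.mem_univ k); linarith
  · intro k hk
    show Real.exp (-(L j0 - L k)) = 1
    have h1 := key j0 k hk
    have h2 := hj0 k (Finset.mem_univ k)
    have : L j0 - L k = 0 := by linarith
    rw [this]; simp
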